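/- For 0 < β < α and any real s, x, the difference between e^{-β(x-s)²} and the sum (α/√(π(α-β))) Σ_{k∈ℤ} e^{-(αβ/(α-β))(k-s)²} e^{-α(x-k)²} is bounded in absolute value by ε(α,β)·e^{-β(x-s)²}, where ε(α,β) = θ₃(0, e^{-(π²/α)(1-β/α)}) - 1 and θ₃(z,q) = Σ_{n∈ℤ} q^{n²} e^{2inz} is the Jacobi theta function. -/

import Mathlib

open Real

lemma summable_gauss_int {c : ℝ} (hc : 0 < c) :
    Summable (fun n : ℤ ↦ Real.exp (-c * (n : ℝ) ^ 2)) := by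
  have hgeom : Summable (fun n : ℕ ↦ Real.exp (-c) ^ n) :=
    summable_geometric_of_lt_one (Real.exp_pos _).le
      (by rw [Real.exp_lt_one_iff]; linarith)
  have hle : ∀ n : ℕ, -c * (n : ℝ) ^ 2 ≤ (n : ℝ) * -c := by
    intro n
    have h1 : (n : ℝ) ≤ (n : ℝ) ^ 2 := by exact_mod_cast Nat.le_self_pow two_ne_zero n
    nlinarith [mul_le_mul_of_nonneg_left h1 hc.le]
  apply Summable.of_nat_of_neg
  · refine hgeom.of_nonneg_of_le (fun n => (Real.exp_pos _).le) (fun n => ?_)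
    rw [← Real.exp_nat_mul]
    exact Real.exp_le_exp.mpr (hle n)
  · refine hgeom.of_nonneg_of_le (fun n => (Real.exp_pos _).le) (fun n => ?_)
    rw [← Real.exp_nat_mul]
    apply Real.exp_le_exp.mpr
    push_cast
    rw [neg_sq]
    exact hle n

lemma poisson_gauss (A m : ℝ) (hA : 0 < A) :
    Real.sqrt (A / π) * ∑' k : ℤ, Real.exp (-A * ((k : ℝ) - m) ^ 2) =
      ∑' n : ℤ, Real.exp (-(π ^ 2 / A) * (n : ℝ) ^ 2) * Real.cos (2 * π * m * (n : ℝ)) := by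
  have hπ := Real.pi_pos
  have hπc : (π : ℂ) ≠ 0 := Complex.ofReal_ne_zero.mpr (ne_of_gt hπ)
  have hAc : (A : ℂ) ≠ 0 := Complex.ofReal_ne_zero.mpr (ne_of_gt hA)
  have ha : (0 : ℝ) < π / A := by positivity
  have H := Complex.tsum_exp_neg_quadratic (a := ((π / A : ℝ) : ℂ))
      (by simpa using ha) (Complex.I * (m : ℂ))
  have hL : ∀ n : ℤ,
      Complex.exp (-(π : ℂ) * ((π / A : ℝ) : ℂ) * (n : ℂ) ^ 2 +
        2 * (π : ℂ) * (Complex.I * (m : ℂ)) * (n : ℂ)) =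
      ((Real.exp (-(π ^ 2 / A) * (n : ℝ) ^ 2) : ℝ) : ℂ) *
        Complex.exp (((2 * π * m * (n : ℝ) : ℝ) : ℂ) * Complex.I) := by
    intro n
    rw [Complex.ofReal_exp, ← Complex.exp_add]
    congr 1
    push_cast
    field_simp
  have hR : ∀ n : ℤ,
      Complex.exp (-(π : ℂ) / ((π / A : ℝ) : ℂ) *
        ((n : ℂ) + Complex.I * (Complex.I * (m : ℂ))) ^ 2) =
      ((Real.exp (-A * ((n : ℝ) - m) ^ 2) : ℝ) : ℂ) := by
    intro n
    rw [Complex.ofReal_exp]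
    congr 1
    have hI : Complex.I * (Complex.I * (m : ℂ)) = (-m : ℂ) := by
      rw [← mul_assoc, Complex.I_mul_I]; ring
    rw [hI]
    push_cast
    field_simp
    ring
  rw [tsum_congr hL, tsum_congr hR, ← Complex.ofReal_tsum] at H
  have hre : (1 : ℝ) / (π / A) ^ ((1 : ℝ) / 2) = Real.sqrt (A / π) := by
    rw [← Real.sqrt_eq_rpow, one_div, ← Real.sqrt_inv, inv_div]
  have hcoef : 1 / (((π / A : ℝ) : ℂ)) ^ (1 / 2 : ℂ) = ((Real.sqrt (A / π) : ℝ) : ℂ) := by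
    rw [show ((1 / 2 : ℂ)) = (((1 / 2 : ℝ) : ℝ) : ℂ) by norm_num,
      ← Complex.ofReal_cpow ha.le, ← hre]
    norm_cast
  rw [hcoef, ← Complex.ofReal_mul] at H
  have hsum : Summable (fun n : ℤ =>
      ((Real.exp (-(π ^ 2 / A) * (n : ℝ) ^ 2) : ℝ) : ℂ) *
        Complex.exp (((2 * π * m * (n : ℝ) : ℝ) : ℂ) * Complex.I)) := by
    apply Summable.of_norm
    have heq : ∀ n : ℤ, ‖((Real.exp (-(π ^ 2 / A) * (n : ℝ) ^ 2) : ℝ) : ℂ) *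
        Complex.exp (((2 * π * m * (n : ℝ) : ℝ) : ℂ) * Complex.I)‖
        = Real.exp (-(π ^ 2 / A) * (n : ℝ) ^ 2) := by
      intro n
      rw [norm_mul, Complex.norm_real, Real.norm_eq_abs,
        Complex.norm_exp_ofReal_mul_I, mul_one, abs_of_pos (Real.exp_pos _)]
    rw [funext heq]
    exact summable_gauss_int (by positivity)
  have H2 := congrArg Complex.re H
  rw [Complex.re_tsum hsum, Complex.ofReal_re] at H2
  rw [← H2]
  apply tsum_congr
  intro n
  rw [Complex.re_ofReal_mul, Complex.exp_ofReal_mul_I_re]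

theorem gaussian_shift_approximation (α β s x : ℝ) (hβ : 0 < β) (hαβ : β < α) :
    |Real.exp (-β * (x - s)^2) -
        (α / Real.sqrt (π * (α - β))) *
          ∑' k : ℤ, Real.exp (-(α * β / (α - β)) * ((k : ℝ) - s)^2) *
            Real.exp (-α * (x - (k : ℝ))^2)| ≤
      ((∑' n : ℤ, Real.exp (-(π^2 / α) * (1 - β / α) * (n : ℝ)^2)) - 1) *
        Real.exp (-β * (x - s)^2) := by
  have hα : 0 < α := hβ.trans hαβ
  have hd : 0 < α - β := sub_pos.mpr hαβ
  have hπ := Real.pi_pos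
  set A : ℝ := α ^ 2 / (α - β) with hA
  have hA0 : 0 < A := by positivity
  set m : ℝ := ((α - β) * x + β * s) / α with hm
  have hcoe : ∀ n : ℤ, -(π^2 / α) * (1 - β / α) * (n : ℝ)^2 = -(π ^ 2 / A) * (n : ℝ) ^ 2 := by
    intro n
    have : -(π^2 / α) * (1 - β / α) = -(π ^ 2 / A) := by
      rw [hA]; field_simp
    rw [this]
  -- termwise completion of square
  have key : ∀ k : ℤ, Real.exp (-(α * β / (α - β)) * ((k : ℝ) - s)^2) *
      Real.exp (-α * (x - (k : ℝ))^2)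
      = Real.exp (-β * (x - s)^2) * Real.exp (-A * ((k : ℝ) - m) ^ 2) := by
    intro k
    rw [← Real.exp_add, ← Real.exp_add]
    congr 1
    rw [hA, hm]
    field_simp
    ring
  rw [tsum_congr key, tsum_mul_left,
    tsum_congr (fun n : ℤ => congrArg Real.exp (hcoe n))]
  have hC : α / Real.sqrt (π * (α - β)) = Real.sqrt (A / π) := by
    rw [hA, div_div, Real.sqrt_div (sq_nonneg α), Real.sqrt_sq hα.le, mul_comm]
  rw [hC]
  set E := Real.exp (-β * (x - s)^2) with hE'
  have hE : 0 < E := Real.exp_pos _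
  have hpo := poisson_gauss A m hA0
  rw [mul_left_comm, hpo]
  set t : ℤ → ℝ := fun n => Real.exp (-(π ^ 2 / A) * (n : ℝ) ^ 2) with ht'
  set f : ℤ → ℝ := fun n => t n * Real.cos (2 * π * m * (n : ℝ)) with hf'
  have ht : Summable t := summable_gauss_int (by positivity)
  have hbd : ∀ n : ℤ, |f n| ≤ t n := by
    intro n
    rw [hf', abs_mul, abs_of_pos (Real.exp_pos _)]
    exact mul_le_of_le_one_right (Real.exp_pos _).le (abs_cos_le_one _)
  have hf : Summable f :=
    Summable.of_abs (ht.of_nonneg_of_le (fun n => abs_nonneg _) hbd)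
  have hf0 : f 0 = 1 := by simp [hf', ht']
  have ht0 : t 0 = 1 := by simp [ht']
  have hg : Summable (fun n : ℤ => if n = 0 then 0 else t n) := by
    refine ht.of_nonneg_of_le (fun n => ?_) (fun n => ?_)
    · split
      · exact le_rfl
      · exact (Real.exp_pos _).le
    · split
      · exact (Real.exp_pos _).le
      · exact le_rfl
  have hfi := Summable.tsum_eq_add_tsum_ite hf 0
  have hti := Summable.tsum_eq_add_tsum_ite ht 0
  rw [hf0] at hfi
  rw [ht0] at hti
  have hRb : |∑' n : ℤ, if n = 0 then 0 else f n| ≤ ∑' n : ℤ, if n = 0 then 0 else t n := by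
    have := tsum_of_norm_bounded hg.hasSum (f := fun n : ℤ => if n = 0 then 0 else f n)
      (fun n => ?_)
    · simpa using this
    · rw [Real.norm_eq_abs]
      by_cases h : n = 0
      · simp [h]
      · simp only [h, if_false]
        exact hbd n
  rw [hfi, hti]
  have habs : |E - E * (1 + ∑' n : ℤ, if n = 0 then 0 else f n)|
      = E * |∑' n : ℤ, if n = 0 then 0 else f n| := by
    rw [show E - E * (1 + ∑' n : ℤ, if n = 0 then 0 else f n)
        = -(E * (∑' n : ℤ, if n = 0 then 0 else f n)) by ring, abs_neg, abs_mul,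
      abs_of_pos hE]
  rw [habs]
  calc E * |∑' n : ℤ, if n = 0 then 0 else f n|
      ≤ E * ∑' n : ℤ, if n = 0 then 0 else t n := mul_le_mul_of_nonneg_left hRb hE.le
    _ = (1 + (∑' n : ℤ, if n = 0 then 0 else t n) - 1) * E := by ring
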